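/- Let L be a cubic number field whose discriminant equals −3n² for some integer n. Then L is a pure cubic field, i.e., L = ℚ(∛m) for some cube-free integer m. -/

import Mathlib

open Module IntermediateField Polynomial Algebra Matrix

private theorem cubefree_decomp : ∀ N : ℤ, N ≠ 0 → ∃ m k : ℤ, k ≠ 0 ∧ N = m * k ^ 3 ∧
    ∀ p : ℤ, Prime p → ¬ (p ^ 3 ∣ m) := by
  have H : ∀ n : ℕ, ∀ N : ℤ, N.natAbs = n → N ≠ 0 → ∃ m k : ℤ, k ≠ 0 ∧ N = m * k ^ 3 ∧
      ∀ p : ℤ, Prime p → ¬ (p ^ 3 ∣ m) := by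
    intro n
    induction n using Nat.strong_induction_on with
    | _ n ih =>
      intro N hn hN0
      by_cases h : ∃ p : ℤ, Prime p ∧ p ^ 3 ∣ N
      · obtain ⟨p, hp, d, hd⟩ := h
        have hd0 : d ≠ 0 := by rintro rfl; simp at hd; tauto
        have hplt : 1 < p.natAbs := by
          have := Int.prime_iff_natAbs_prime.mp hp
          exact this.one_lt
        have hlt : d.natAbs < n := by
          rw [← hn, hd, Int.natAbs_mul, Int.natAbs_pow]
          calc d.natAbs < p.natAbs ^ 3 * d.natAbs := by
                apply lt_mul_of_one_lt_left (Nat.pos_of_ne_zero (Int.natAbs_ne_zero.mpr hd0))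
                exact one_lt_pow₀ hplt (by norm_num)
            _ = _ := rfl
        obtain ⟨m, k, hk0, hmk, hcf⟩ := ih d.natAbs hlt d rfl hd0
        exact ⟨m, p * k, mul_ne_zero hp.ne_zero hk0, by rw [hd, hmk]; ring, hcf⟩
      · push_neg at h
        exact ⟨N, 1, one_ne_zero, by ring, h⟩
  exact fun N hN => H N.natAbs N rfl hN


set_option maxHeartbeats 1000000 in
/-- Let `L` be a cubic number field whose discriminant equals `−3n²` for some
integer `n`.  Then `L` is a pure cubic field: `L = ℚ(∛m)` for some cube-free
integer `m`. -/
theorem cubic_field_with_discr_neg_three_sq_is_pure (L : Type*) [Field L]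
    [NumberField L] (hdeg : Module.finrank ℚ L = 3)
    (n : ℤ) (hdisc : NumberField.discr L = -3 * n ^ 2) :
    ∃ (m : ℤ) (α : L), (∀ p : ℤ, Prime p → ¬(p ^ 3 ∣ m)) ∧
      α ^ 3 = (m : L) ∧ IntermediateField.adjoin ℚ {α} = ⊤ := by
  set E := AlgebraicClosure ℚ with hE
  have hrc : ∀ q : ℚ, (algebraMap ℚ E) q = (q : E) := fun q => eq_ratCast (algebraMap ℚ E) q
  have hrc' : ∀ q : ℚ, (@algebraMap ℚ E _ _ (AlgebraicClosure.instAlgebra ℚ)) q = (q : E) :=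
    fun q => hrc q
  have hcard : Fintype.card (L →ₐ[ℚ] E) = 3 := by rw [AlgHom.card]; exact hdeg
  obtain ⟨f⟩ : Nonempty (Fin 3 ≃ (L →ₐ[ℚ] E)) := ⟨(Fintype.equivFinOfCardEq hcard).symm⟩
  set pb := Field.powerBasisOfFiniteOfSeparable ℚ L with hpb
  have hdim : pb.dim = 3 := by rw [pb.finrank] at hdeg; exact hdeg
  -- step 1 : discr of pb.basis vs NumberField.discr
  obtain ⟨c, hc0, hcd⟩ : ∃ c : ℚ, c ≠ 0 ∧
      Algebra.discr ℚ pb.basis = c ^ 2 * (NumberField.discr L : ℚ) := by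
    have hcardi : Fintype.card (Module.Free.ChooseBasisIndex ℤ (NumberField.RingOfIntegers L))
        = Fintype.card (Fin pb.dim) := by
      rw [Fintype.card_fin]
      rw [hdim, ← hdeg, Module.finrank_eq_card_basis (NumberField.integralBasis L)]
    let g := Fintype.equivOfCardEq hcardi
    let ib := (NumberField.integralBasis L).reindex g
    have hib : Algebra.discr ℚ ib = (NumberField.discr L : ℚ) := by
      rw [NumberField.coe_discr]
      rw [show (ib : _ → L) = (NumberField.integralBasis L) ∘ g.symm from
        (NumberField.integralBasis L).coe_reindex g]
      exact Algebra.discr_reindex ℚ (NumberField.integralBasis L) g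
    let P : Matrix (Fin pb.dim) (Fin pb.dim) ℚ := ib.toMatrix pb.basis
    have hP : (pb.basis : _ → L) = (ib : _ → L) ᵥ* P.map (algebraMap ℚ L) := by
      funext j
      rw [show ((ib : _ → L) ᵥ* P.map (algebraMap ℚ L)) j
          = ∑ i, (P.map (algebraMap ℚ L)) i j * ib i by
        simp [Matrix.vecMul, dotProduct, mul_comm]]
      simp only [Matrix.map_apply, ← Algebra.smul_def]
      exact (ib.sum_toMatrix_smul_self pb.basis j).symm
    refine ⟨P.det, ?_, ?_⟩
    · have : Invertible P := ib.invertibleToMatrix pb.basis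
      exact (Matrix.isUnit_det_of_invertible P).ne_zero
    · rw [hP, Algebra.discr_of_matrix_vecMul, hib]
  set t : Fin 3 → E := fun i => f i pb.gen with ht
  have hD2 : ((t 1 - t 0) * (t 2 - t 0) * (t 2 - t 1)) ^ 2 = ((-3 * (n : ℚ) ^ 2 * c ^ 2 : ℚ) : E) := by
    have hre : Algebra.discr ℚ ((pb.basis : _ → L) ∘ (finCongr hdim).symm)
        = Algebra.discr ℚ pb.basis := Algebra.discr_reindex ℚ pb.basis (finCongr hdim)
    have h2 := Algebra.discr_eq_det_embeddingsMatrixReindex_pow_two ℚ E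
      ((pb.basis : _ → L) ∘ (finCongr hdim).symm) f
    have hMij : ∀ i j : Fin 3,
        (embeddingsMatrixReindex ℚ E ((pb.basis : _ → L) ∘ (finCongr hdim).symm) f) i j
          = t j ^ (i : ℕ) := by
      intro i j
      simp [Algebra.embeddingsMatrixReindex, Algebra.embeddingsMatrix,
        PowerBasis.coe_basis, map_pow, ht]
    have hdet : (embeddingsMatrixReindex ℚ E ((pb.basis : _ → L) ∘ (finCongr hdim).symm) f).det ^ 2
        = ((t 1 - t 0) * (t 2 - t 0) * (t 2 - t 1)) ^ 2 := by
      rw [Matrix.det_fin_three]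
      simp only [hMij]
      norm_num
      ring
    rw [← hdet, ← h2, hre, hcd, hdisc, eq_ratCast (algebraMap ℚ E)]
    push_cast
    ring
  -- nonvanishing
  have hn0 : (n : ℚ) ≠ 0 := by
    have := NumberField.discr_ne_zero L
    rw [hdisc] at this
    simpa using fun h => this (by exact_mod_cast (by rw [h]; ring : (-3 : ℤ) * n ^ 2 = 0))
  set N : ℚ := (n : ℚ) * c with hN
  have hN0 : N ≠ 0 := mul_ne_zero hn0 hc0
  have hNE : (N : E) ≠ 0 := by
    simpa using fun h => hN0 (by exact_mod_cast h)
  set D : E := (t 1 - t 0) * (t 2 - t 0) * (t 2 - t 1) with hDdef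
  set s : E := D / (N : E) with hsdef
  have hs : s ^ 2 = -3 := by
    rw [hsdef, div_pow, hD2]
    rw [div_eq_iff (pow_ne_zero _ hNE), hN]
    push_cast
    ring
  have hsD : s * D = -3 * (N : E) := by
    rw [hsdef, div_mul_eq_mul_div, mul_comm, ← pow_two, hD2, div_eq_iff hNE, hN]
    push_cast
    ring
  -- traces and norm
  set a : ℚ := Algebra.trace ℚ L pb.gen with haq
  set b : ℚ := Algebra.trace ℚ L (pb.gen ^ 2) with hbq
  set q3 : ℚ := Algebra.norm ℚ pb.gen with hcq
  have ha : t 0 + t 1 + t 2 = ((a : ℚ) : E) := by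
    rw [haq, ← hrc', trace_eq_sum_embeddings E (K := ℚ) (L := L)]
    refine Eq.trans ?_ (Fintype.sum_equiv f (fun i => t i) (fun σ => σ pb.gen) (fun i => rfl))
    rw [Fin.sum_univ_three]
  have hb : t 0 ^ 2 + t 1 ^ 2 + t 2 ^ 2 = ((b : ℚ) : E) := by
    rw [hbq, ← hrc', trace_eq_sum_embeddings E (K := ℚ) (L := L)]
    refine Eq.trans ?_ (Fintype.sum_equiv f (fun i => t i ^ 2) (fun σ => σ (pb.gen ^ 2))
      (fun i => by simp [ht, map_pow]))
    rw [Fin.sum_univ_three]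
  have hc : t 0 * t 1 * t 2 = ((q3 : ℚ) : E) := by
    rw [hcq, ← hrc, Algebra.norm_eq_prod_embeddings]
    rw [← Fintype.prod_equiv f (fun i => t i) (fun σ => σ pb.gen) (fun i => rfl)]
    rw [Fin.prod_univ_three]
  -- resolvents
  set u : E := t 0 + ((-1 + s)/2) * t 1 + ((-1 - s)/2) * t 2 with hu
  set v : E := t 0 + ((-1 - s)/2) * t 1 + ((-1 + s)/2) * t 2 with hv
  set A : ℚ := -(5/4)*a^3 + (9/4)*a*b + (27/2)*q3 + (9/2)*N with hAq
  set B : ℚ := -(5/4)*a^3 + (9/4)*a*b + (27/2)*q3 - (9/2)*N with hBq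
  set Cq : ℚ := (3*b - a^2)/2 with hCq
  have hu3 : u ^ 3 = ((A : ℚ) : E) := by
    rw [hu, hAq]
    have hP : (0:E) = 0 := rfl
    linear_combination (norm := (push_cast; ring1))
      (3*(t 0 - (t 1 + t 2)/2)*((t 1 - t 2)/2)^2 + s*((t 1 - t 2)/2)^3) * hs
      - (3/2) * hsD
      + (-(5/4)*((t 0 + t 1 + t 2)^2 + (t 0 + t 1 + t 2)*((a:ℚ):E) + ((a:ℚ):E)^2)
          + (9/4)*(t 0^2 + t 1^2 + t 2^2)) * ha
      + ((9/4)*((a:ℚ):E)) * hb + (27/2) * hc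
  have hv3 : v ^ 3 = ((B : ℚ) : E) := by
    rw [hv, hBq]
    linear_combination (norm := (push_cast; ring1))
      (3*(t 0 - (t 1 + t 2)/2)*((t 1 - t 2)/2)^2 - s*((t 1 - t 2)/2)^3) * hs
      + (3/2) * hsD
      + (-(5/4)*((t 0 + t 1 + t 2)^2 + (t 0 + t 1 + t 2)*((a:ℚ):E) + ((a:ℚ):E)^2)
          + (9/4)*(t 0^2 + t 1^2 + t 2^2)) * ha
      + ((9/4)*((a:ℚ):E)) * hb + (27/2) * hc
  have huv : u * v = ((Cq : ℚ) : E) := by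
    rw [hu, hv, hCq]
    linear_combination (norm := (push_cast; ring1))
      (-(((t 1 - t 2)/2)^2)) * hs + (3/2) * hb - (1/2)*((t 0 + t 1 + t 2) + ((a:ℚ):E)) * ha
  have hsum : u + v = 3 * t 0 - ((a : ℚ) : E) := by
    rw [hu, hv]
    linear_combination -ha
  -- field-theoretic endgame
  have hadj : IntermediateField.adjoin ℚ {pb.gen} = ⊤ := by
    rw [_root_.eq_top_iff]
    intro x _
    have hx : x ∈ Algebra.adjoin ℚ ({pb.gen} : Set L) := by
      rw [pb.adjoin_gen_eq_top]; trivial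
    exact (Algebra.adjoin_le (fun y hy => by
      rw [Set.mem_singleton_iff.mp hy]
      exact IntermediateField.mem_adjoin_simple_self ℚ pb.gen) : Algebra.adjoin ℚ _ ≤
        (IntermediateField.adjoin ℚ {pb.gen}).toSubalgebra) hx
  set σ₀ : L →ₐ[ℚ] E := f 0 with hσ₀
  set xw : L := algebraMap ℚ L 3 * pb.gen - algebraMap ℚ L a with hxw
  have hwσ : u + v = σ₀ xw := by
    rw [hsum, hxw, map_sub, _root_.map_mul, AlgHom.commutes, AlgHom.commutes,
      hrc', hrc']
    push_cast
    ring_nf; rfl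
  have hxwadj : IntermediateField.adjoin ℚ {xw} = ⊤ := by
    rw [_root_.eq_top_iff, ← hadj]
    rw [IntermediateField.adjoin_le_iff]
    intro y hy
    rw [Set.mem_singleton_iff.mp hy]
    have h3 : pb.gen = algebraMap ℚ L 3⁻¹ * (xw + algebraMap ℚ L a) := by
      rw [hxw, sub_add_cancel, ← mul_assoc, ← _root_.map_mul]
      norm_num
    rw [h3]
    exact mul_mem (IntermediateField.algebraMap_mem _ _)
      (add_mem (IntermediateField.mem_adjoin_simple_self ℚ xw)
        (IntermediateField.algebraMap_mem _ a))
  set L₀ : IntermediateField ℚ E := σ₀.fieldRange with hL₀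
  have hwadj : IntermediateField.adjoin ℚ {σ₀ xw} = L₀ := by
    rw [hL₀, AlgHom.fieldRange_eq_map, ← hxwadj, IntermediateField.adjoin_map,
      Set.image_singleton]
  have hL₀rank : Module.finrank ℚ L₀ = 3 := by
    rw [← hdeg]
    exact (LinearEquiv.finrank_eq (AlgEquiv.ofInjectiveField σ₀).toLinearEquiv).symm
  -- u and v lie in L₀
  have hwmem : u + v ∈ L₀ := by rw [hwσ]; exact ⟨xw, rfl⟩
  have humem : u ∈ L₀ := by
    by_cases hu0 : u = 0
    · rw [hu0]; exact zero_mem _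
    · have hvu : v = (Cq : E) * u⁻¹ := by
        rw [eq_mul_inv_iff_mul_eq₀ hu0]
        rw [mul_comm]
        exact huv
      have hwin : u + v ∈ IntermediateField.adjoin ℚ {u} := by
        refine add_mem (IntermediateField.mem_adjoin_simple_self ℚ u) ?_
        rw [hvu, ← hrc Cq]
        exact mul_mem (IntermediateField.algebraMap_mem _ _)
          (inv_mem (IntermediateField.mem_adjoin_simple_self ℚ u))
      have hle : L₀ ≤ IntermediateField.adjoin ℚ {u} := by
        intro z hz
        rw [← hwadj, ← hwσ] at hz
        exact (IntermediateField.adjoin_simple_le_iff.mpr hwin) hz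
      have hint : IsIntegral ℚ u := by
        refine ⟨Polynomial.X ^ 3 - Polynomial.C A, ?_, ?_⟩
        · apply Polynomial.monic_X_pow_sub_C _ (by norm_num)
        · simp [hu3, eq_ratCast (algebraMap ℚ E) A]
      have hfd : FiniteDimensional ℚ (IntermediateField.adjoin ℚ {u}) :=
        IntermediateField.adjoin.finiteDimensional hint
      have hfr : Module.finrank ℚ (IntermediateField.adjoin ℚ {u}) ≤ 3 := by
        rw [IntermediateField.adjoin.finrank hint]
        have hdvd : minpoly ℚ u ∣ Polynomial.X ^ 3 - Polynomial.C A :=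
          minpoly.dvd ℚ u (by simp [hu3, eq_ratCast (algebraMap ℚ E) A])
        have hne : (Polynomial.X ^ 3 - Polynomial.C A : Polynomial ℚ) ≠ 0 := by
          intro h
          have := congrArg Polynomial.natDegree h
          simp [Polynomial.natDegree_X_pow_sub_C] at this
        simpa [Polynomial.natDegree_X_pow_sub_C] using
          Polynomial.natDegree_le_of_dvd hdvd hne
      have := IntermediateField.eq_of_le_of_finrank_le hle (by rw [hL₀rank]; exact hfr)
      rw [this]
      exact IntermediateField.mem_adjoin_simple_self ℚ u
  have hvmem : v ∈ L₀ := by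
    have : v = (u + v) - u := by ring
    rw [this]
    exact sub_mem hwmem humem
  -- pull back to L
  have hinj : Function.Injective σ₀ := σ₀.toRingHom.injective
  obtain ⟨x, hx'⟩ := humem
  obtain ⟨y, hy'⟩ := hvmem
  have hx : σ₀ x = u := hx'
  have hy : σ₀ y = v := hy'
  have hx3 : x ^ 3 = algebraMap ℚ L A := hinj (by
    rw [map_pow, hx, hu3, σ₀.commutes A]; rfl)
  have hy3 : y ^ 3 = algebraMap ℚ L B := hinj (by
    rw [map_pow, hy, hv3, σ₀.commutes B]; rfl)
  have hxy : x + y = xw := hinj (by rw [map_add, hx, hy, ← hwσ])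
  have hbotlt : ∀ z : L, z ∈ (⊥ : IntermediateField ℚ L) → z ≠ xw := by
    intro z hz hzw
    have htop : (⊤ : IntermediateField ℚ L) = ⊥ := by
      refine le_antisymm ?_ bot_le
      rw [← hxwadj]
      exact IntermediateField.adjoin_le_iff.mpr (by
        intro w hw
        rw [Set.mem_singleton_iff.mp hw, ← hzw]
        exact hz)
    have h1 : Module.finrank ℚ (⊤ : IntermediateField ℚ L) = 1 := by
      rw [htop]; exact IntermediateField.finrank_bot
    rw [IntermediateField.finrank_top', hdeg] at h1
    norm_num at h1
  have hpick : ∃ (α₁ : L) (r : ℚ), α₁ ^ 3 = algebraMap ℚ L r ∧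
      α₁ ∉ (⊥ : IntermediateField ℚ L) := by
    by_cases hxb : x ∈ (⊥ : IntermediateField ℚ L)
    · refine ⟨y, B, hy3, fun hyb => ?_⟩
      exact hbotlt (x + y) (add_mem hxb hyb) hxy
    · exact ⟨x, A, hx3, hxb⟩
  obtain ⟨α₁, r, hr3, hnb⟩ := hpick
  have hr0 : r ≠ 0 := by
    rintro rfl
    apply hnb
    have : α₁ = 0 := by
      have := hr3
      rw [map_zero, pow_eq_zero_iff (by norm_num : 3 ≠ 0)] at this
      exact this
    rw [this]
    exact zero_mem _
  set N₀ : ℤ := r.num * (r.den : ℤ) ^ 2 with hN₀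
  have hden0 : (r.den : ℚ) ≠ 0 := by exact_mod_cast r.den_ne_zero
  have hN₀0 : N₀ ≠ 0 := mul_ne_zero (Rat.num_ne_zero.mpr hr0)
    (pow_ne_zero _ (by exact_mod_cast r.den_ne_zero))
  obtain ⟨m, k, hk0, hmk, hcf⟩ := cubefree_decomp N₀ hN₀0
  have hkQ : (k : ℚ) ≠ 0 := Int.cast_ne_zero.mpr hk0
  have hratio : ((r.den : ℚ) / (k : ℚ)) ≠ 0 := div_ne_zero hden0 hkQ
  set α : L := algebraMap ℚ L ((r.den : ℚ) / (k : ℚ)) * α₁ with hα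
  have hα3 : α ^ 3 = (m : L) := by
    rw [hα, mul_pow, ← map_pow, hr3, ← _root_.map_mul]
    have hq : ((r.den : ℚ) / (k : ℚ)) ^ 3 * r = (m : ℚ) := by
      have hm' : (r.num : ℚ) * (r.den : ℚ) ^ 2 = (m : ℚ) * (k : ℚ) ^ 3 := by
        exact_mod_cast congrArg (fun z : ℤ => (z : ℚ)) hmk
      have hr' : (r.num : ℚ) = r * (r.den : ℚ) := (div_eq_iff hden0).mp (Rat.num_div_den r)
      field_simp
      linear_combination hm' - (r.den : ℚ) ^ 2 * hr'
    rw [hq]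
    simp [map_intCast]
  have hnb' : α ∉ (⊥ : IntermediateField ℚ L) := by
    intro hmem
    apply hnb
    have hα1 : α₁ = algebraMap ℚ L ((r.den : ℚ) / (k : ℚ))⁻¹ * α := by
      rw [hα, ← mul_assoc, ← _root_.map_mul, inv_mul_cancel₀ hratio, _root_.map_one, one_mul]
    rw [hα1]
    exact mul_mem (IntermediateField.algebraMap_mem _ _) hmem
  refine ⟨m, α, hcf, hα3, ?_⟩
  have hdvd3 : Module.finrank ℚ (IntermediateField.adjoin ℚ {α}) ∣ 3 := by
    rw [← hdeg]
    exact ⟨Module.finrank (IntermediateField.adjoin ℚ {α}) L,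
      (Module.finrank_mul_finrank ℚ _ L).symm⟩
  have hne1 : Module.finrank ℚ (IntermediateField.adjoin ℚ {α}) ≠ 1 := by
    rw [Ne, IntermediateField.finrank_eq_one_iff]
    intro hbot
    apply hnb'
    rw [← hbot]
    exact IntermediateField.mem_adjoin_simple_self ℚ α
  have h3 : Module.finrank ℚ (IntermediateField.adjoin ℚ {α}) = 3 := by
    rcases (Nat.prime_three).eq_one_or_self_of_dvd _ hdvd3 with h | h
    · exact absurd h hne1
    · exact h
  exact IntermediateField.eq_of_le_of_finrank_le le_top
    (by rw [IntermediateField.finrank_top', hdeg, h3])
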